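/- Let λ > 0 and let (c, Q) be a spectral pair at λ. Then λ² θmin + r ≤ λ c ≤ λ² θmax + r; setting θ₀ = (λ c − r)/λ², which lies in [θmin, θmax], one has Q''(θ) ≥ 0 for all θ ∈ [θmin, θ₀] and Q''(θ) ≤ 0 for all θ ∈ [θ₀, θmax]; and Q'(θ) > 0 for every θ ∈ (θmin, θmax), so that Q is increasing on [θmin, θmax]. -/

import Mathlib

open Set Filter MeasureTheory

/-- A spectral pair `(c, Q)` at `lam` for parameters `thmin thmax alpha r`:
`Q` is positive, normalized, twice continuously differentiable, solves the eigenproblem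
on `(thmin, thmax)` and satisfies Neumann boundary conditions. -/
def IsSpectralPair (thmin thmax alpha r lam c : ℝ) (Q : ℝ → ℝ) : Prop :=
  ContDiff ℝ 2 Q ∧
  (∀ θ ∈ Set.Icc thmin thmax, 0 < Q θ) ∧
  (∫ θ in Set.Ioo thmin thmax, Q θ) = 1 ∧
  (∀ θ ∈ Set.Ioo thmin thmax,
    alpha * iteratedDeriv 2 Q θ + (-(lam * c) + θ * lam ^ 2 + r) * Q θ = 0) ∧
  deriv Q thmin = 0 ∧ deriv Q thmax = 0

theorem statement3 (thmin thmax alpha r : ℝ)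
    (hth : 0 < thmin) (hthth : thmin < thmax) (halpha : 0 < alpha) (hr : 0 < r)
    (lam c : ℝ) (hlam : 0 < lam) (Q : ℝ → ℝ)
    (hQ : IsSpectralPair thmin thmax alpha r lam c Q) :
    lam ^ 2 * thmin + r ≤ lam * c ∧ lam * c ≤ lam ^ 2 * thmax + r ∧
    (lam * c - r) / lam ^ 2 ∈ Set.Icc thmin thmax ∧
    (∀ θ ∈ Set.Icc thmin ((lam * c - r) / lam ^ 2), 0 ≤ iteratedDeriv 2 Q θ) ∧
    (∀ θ ∈ Set.Icc ((lam * c - r) / lam ^ 2) thmax, iteratedDeriv 2 Q θ ≤ 0) ∧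
    (∀ θ ∈ Set.Ioo thmin thmax, 0 < deriv Q θ) ∧
    StrictMonoOn Q (Set.Icc thmin thmax) := by
  obtain ⟨hC, hpos, hint, hODE, hbmin, hbmax⟩ := hQ
  have hlam2 : (0:ℝ) < lam ^ 2 := by positivity
  set θ₀ := (lam * c - r) / lam ^ 2 with hθ₀
  have hθ₀' : lam ^ 2 * θ₀ = lam * c - r := by
    rw [hθ₀]
    field_simp
  clear_value θ₀
  have hQcont : Continuous Q := hC.continuous
  have hQ'cont : Continuous (deriv Q) := hC.continuous_deriv one_le_two
  have hQ''cont : Continuous (iteratedDeriv 2 Q) := hC.continuous_iteratedDeriv 2 le_rfl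
  have hiter : iteratedDeriv 2 Q = deriv (deriv Q) := by
    rw [iteratedDeriv_succ, iteratedDeriv_one]
  -- the pointwise identity on the open interval
  have hId : ∀ θ ∈ Set.Ioo thmin thmax,
      iteratedDeriv 2 Q θ = lam ^ 2 * (θ₀ - θ) * Q θ / alpha := by
    intro θ hθ
    have h := hODE θ hθ
    rw [eq_div_iff halpha.ne']
    linear_combination h - Q θ * hθ₀'
  -- extended to the closed interval by continuity
  have hIdc : ∀ θ ∈ Set.Icc thmin thmax,
      iteratedDeriv 2 Q θ = lam ^ 2 * (θ₀ - θ) * Q θ / alpha := by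
    have hset : IsClosed {x : ℝ | iteratedDeriv 2 Q x = lam ^ 2 * (θ₀ - x) * Q x / alpha} :=
      isClosed_eq hQ''cont (by fun_prop)
    intro θ hθ
    have hcl : Set.Icc thmin thmax ⊆ closure (Set.Ioo thmin thmax) := by
      rw [closure_Ioo hthth.ne]
    exact (hset.closure_subset_iff.mpr hId) (hcl hθ)
  have hmin : thmin ≤ θ₀ := by
    by_contra h
    push_neg at h
    have hanti : StrictAntiOn (deriv Q) (Set.Icc thmin thmax) := by
      apply strictAntiOn_of_deriv_neg (convex_Icc _ _) hQ'cont.continuousOn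
      intro x hx
      rw [interior_Icc] at hx
      rw [← hiter, hId x hx]
      have hpx := hpos x (Set.Ioo_subset_Icc_self hx)
      apply div_neg_of_neg_of_pos _ halpha
      exact mul_neg_of_neg_of_pos (mul_neg_of_pos_of_neg hlam2 (sub_neg.mpr (h.trans hx.1))) hpx
    have := hanti (Set.left_mem_Icc.mpr hthth.le) (Set.right_mem_Icc.mpr hthth.le) hthth
    rw [hbmin, hbmax] at this
    exact lt_irrefl 0 this
  have hmax : θ₀ ≤ thmax := by
    by_contra h
    push_neg at h
    have hmono : StrictMonoOn (deriv Q) (Set.Icc thmin thmax) := by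
      apply strictMonoOn_of_deriv_pos (convex_Icc _ _) hQ'cont.continuousOn
      intro x hx
      rw [interior_Icc] at hx
      rw [← hiter, hId x hx]
      have hpx := hpos x (Set.Ioo_subset_Icc_self hx)
      apply div_pos _ halpha
      exact mul_pos (mul_pos hlam2 (sub_pos.mpr (hx.2.trans h))) hpx
    have := hmono (Set.left_mem_Icc.mpr hthth.le) (Set.right_mem_Icc.mpr hthth.le) hthth
    rw [hbmin, hbmax] at this
    exact lt_irrefl 0 this
  have hd : ∀ θ ∈ Set.Ioo thmin thmax, 0 < deriv Q θ := by
    intro θ hθ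
    rcases le_total θ θ₀ with h1 | h1
    · have hmono : StrictMonoOn (deriv Q) (Set.Icc thmin θ) := by
        apply strictMonoOn_of_deriv_pos (convex_Icc _ _) hQ'cont.continuousOn
        intro x hx
        rw [interior_Icc] at hx
        have hxI : x ∈ Set.Ioo thmin thmax := ⟨hx.1, hx.2.trans hθ.2⟩
        rw [← hiter, hId x hxI]
        have hpx := hpos x (Set.Ioo_subset_Icc_self hxI)
        apply div_pos _ halpha
        exact mul_pos (mul_pos hlam2 (sub_pos.mpr (lt_of_lt_of_le hx.2 h1))) hpx
      have := hmono (Set.left_mem_Icc.mpr hθ.1.le) (Set.right_mem_Icc.mpr hθ.1.le) hθ.1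
      rwa [hbmin] at this
    · have hanti : StrictAntiOn (deriv Q) (Set.Icc θ thmax) := by
        apply strictAntiOn_of_deriv_neg (convex_Icc _ _) hQ'cont.continuousOn
        intro x hx
        rw [interior_Icc] at hx
        have hxI : x ∈ Set.Ioo thmin thmax := ⟨hθ.1.trans hx.1, hx.2⟩
        rw [← hiter, hId x hxI]
        have hpx := hpos x (Set.Ioo_subset_Icc_self hxI)
        apply div_neg_of_neg_of_pos _ halpha
        exact mul_neg_of_neg_of_pos (mul_neg_of_pos_of_neg hlam2 (sub_neg.mpr (lt_of_le_of_lt h1 hx.1))) hpx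
      have := hanti (Set.left_mem_Icc.mpr hθ.2.le) (Set.right_mem_Icc.mpr hθ.2.le) hθ.2
      rwa [hbmax] at this
  refine ⟨?_, ?_, ⟨hmin, hmax⟩, ?_, ?_, hd, ?_⟩
  · have h2 := mul_le_mul_of_nonneg_left hmin hlam2.le
    linarith [hθ₀']
  · have h2 := mul_le_mul_of_nonneg_left hmax hlam2.le
    linarith [hθ₀']
  · intro θ hθ
    have hθ' : θ ∈ Set.Icc thmin thmax := ⟨hθ.1, hθ.2.trans hmax⟩
    rw [hIdc θ hθ']
    have hpx := hpos θ hθ'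
    apply div_nonneg _ halpha.le
    exact mul_nonneg (mul_nonneg hlam2.le (sub_nonneg.mpr hθ.2)) hpx.le
  · intro θ hθ
    have hθ' : θ ∈ Set.Icc thmin thmax := ⟨hmin.trans hθ.1, hθ.2⟩
    rw [hIdc θ hθ']
    have hpx := hpos θ hθ'
    apply div_nonpos_of_nonpos_of_nonneg _ halpha.le
    exact mul_nonpos_of_nonpos_of_nonneg (mul_nonpos_of_nonneg_of_nonpos hlam2.le (sub_nonpos.mpr hθ.1)) hpx.le
  · exact strictMonoOn_of_deriv_pos (convex_Icc _ _) hQcont.continuousOn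
      (by rw [interior_Icc]; exact hd)
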